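/- Let ε > 0 and let {a_n} be an increasing sequence of real numbers satisfying a_n > n^(1+ε) for all n ∈ ℕ. Then for every N ∈ ℕ, the tail sum ∑_{n=N}^∞ 1/a_n is less than (2 + 1/ε) / a_N^(ε/(1+ε)). -/

import Mathlib

lemma tele (ε t : ℝ) (hε : 0 < ε) (ht : 1 ≤ t) :
    ε * (t+1) ^ (-(1+ε)) ≤ t ^ (-ε) - (t+1) ^ (-ε) := by
  have ht0 : 0 < t := lt_of_lt_of_le one_pos ht
  have ht1 : 0 < t + 1 := by linarith
  have hlog : 1 / (t+1) ≤ Real.log (1 + 1/t) := by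
    have h1 : Real.log (t / (t+1)) ≤ t/(t+1) - 1 :=
      Real.log_le_sub_one_of_pos (by positivity)
    have h2 : Real.log (t/(t+1)) = Real.log t - Real.log (t+1) :=
      Real.log_div (ne_of_gt ht0) (ne_of_gt ht1)
    have h3 : Real.log (1 + 1/t) = Real.log (t+1) - Real.log t := by
      rw [← Real.log_div (ne_of_gt ht1) (ne_of_gt ht0)]
      congr 1
      field_simp
    have h4 : t/(t+1) - 1 = -(1/(t+1)) := by field_simp; ring
    rw [h3]; rw [h2, h4] at h1; linarith
  have key : 1 + ε/(t+1) ≤ (1 + 1/t) ^ ε := by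
    have e1 : 1 + ε/(t+1) ≤ Real.exp (ε/(t+1)) := by
      have := Real.add_one_le_exp (ε/(t+1)); linarith
    have e2 : Real.exp (ε/(t+1)) ≤ Real.exp (ε * Real.log (1 + 1/t)) := by
      apply Real.exp_le_exp.2
      have : ε / (t+1) = ε * (1/(t+1)) := by ring
      rw [this]
      exact mul_le_mul_of_nonneg_left hlog hε.le
    have e3 : (1 + 1/t) ^ ε = Real.exp (ε * Real.log (1 + 1/t)) := by
      rw [Real.rpow_def_of_pos (by positivity), mul_comm]
    linarith [e3 ▸ e2]
  -- multiply by (t+1)^(-ε)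
  have hp : (0:ℝ) < (t+1) ^ (-ε) := Real.rpow_pos_of_pos ht1 _
  have key2 : (1 + ε/(t+1)) * (t+1)^(-ε) ≤ (1 + 1/t)^ε * (t+1)^(-ε) :=
    mul_le_mul_of_nonneg_right key hp.le
  have hr : (1 + 1/t)^ε * (t+1)^(-ε) = t^(-ε) := by
    have h1 : (t+1)^(-ε) = ((t+1)⁻¹)^ε := by
      rw [Real.inv_rpow ht1.le, Real.rpow_neg ht1.le]
    rw [h1, ← Real.mul_rpow (by positivity) (by positivity)]
    have : (1 + 1/t) * (t+1)⁻¹ = t⁻¹ := by field_simp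
    rw [this, Real.inv_rpow ht0.le, Real.rpow_neg ht0.le]
  have expand : (1 + ε/(t+1)) * (t+1)^(-ε) = (t+1)^(-ε) + ε * (t+1)^(-(1+ε)) := by
    have : (t+1)^(-(1+ε)) = (t+1)⁻¹ * (t+1)^(-ε) := by
      rw [show -(1+ε) = -1 + -ε by ring, Real.rpow_add ht1, Real.rpow_neg_one]
    rw [this]; field_simp
  rw [hr, expand] at key2
  linarith

lemma tailsum (ε : ℝ) (hε : 0 < ε) (M : ℕ) (hM : 1 ≤ M) :
    Summable (fun n : ℕ => ((M + n : ℕ) : ℝ) ^ (-(1+ε))) ∧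
    ∑' n : ℕ, ((M + n : ℕ) : ℝ) ^ (-(1+ε)) ≤ (1 + 1/ε) * (M : ℝ) ^ (-ε) := by
  have hMR : (1:ℝ) ≤ (M:ℝ) := by exact_mod_cast hM
  have hbase : Summable (fun n : ℕ => ((n:ℝ)) ^ (-(1+ε))) :=
    Real.summable_nat_rpow.2 (by linarith)
  have hsum : Summable (fun n : ℕ => ((M + n : ℕ) : ℝ) ^ (-(1+ε))) := by
    have := (summable_nat_add_iff (f := fun n : ℕ => ((n:ℝ)) ^ (-(1+ε))) M).2 hbase
    refine this.congr fun n => ?_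
    push_cast; ring_nf
  refine ⟨hsum, ?_⟩
  have hsplit : ∑' n : ℕ, ((M + n : ℕ) : ℝ) ^ (-(1+ε))
      = ((M:ℝ)) ^ (-(1+ε)) + ∑' n : ℕ, ((M + (n+1) : ℕ) : ℝ) ^ (-(1+ε)) := by
    rw [Summable.tsum_eq_zero_add hsum]
    norm_num
  have htail : ∑' n : ℕ, ((M + (n+1) : ℕ) : ℝ) ^ (-(1+ε)) ≤ (1/ε) * (M:ℝ)^(-ε) := by
    have hsum' : Summable (fun n : ℕ => ((M + (n+1) : ℕ) : ℝ) ^ (-(1+ε))) := by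
      exact (summable_nat_add_iff 1).2 hsum
    apply Summable.tsum_le_of_sum_range_le hsum'
    intro k
    have step : ∀ i ∈ Finset.range k, ((M + (i+1) : ℕ) : ℝ) ^ (-(1+ε))
        ≤ (1/ε) * (((M + i : ℕ):ℝ) ^ (-ε) - ((M + (i+1) : ℕ):ℝ) ^ (-ε)) := by
      intro i _
      have ht : (1:ℝ) ≤ ((M + i : ℕ) : ℝ) := by
        have : 1 ≤ M + i := le_add_right hM
        exact_mod_cast this
      have := tele ε ((M + i : ℕ) : ℝ) hε ht
      have hc : ((M + (i+1) : ℕ) : ℝ) = ((M + i : ℕ) : ℝ) + 1 := by push_cast; ring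
      rw [hc]
      rw [div_mul_eq_mul_div, le_div_iff₀ hε, one_mul] at *
      linarith [this]
    calc ∑ i ∈ Finset.range k, ((M + (i+1) : ℕ) : ℝ) ^ (-(1+ε))
        ≤ ∑ i ∈ Finset.range k, (1/ε) * (((M + i : ℕ):ℝ) ^ (-ε) - ((M + (i+1) : ℕ):ℝ) ^ (-ε)) :=
          Finset.sum_le_sum step
      _ = (1/ε) * (((M:ℝ)) ^ (-ε) - ((M + k : ℕ):ℝ) ^ (-ε)) := by
          rw [← Finset.mul_sum]
          congr 1
          have := Finset.sum_range_sub' (f := fun i => ((M + i : ℕ):ℝ) ^ (-ε)) k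
          simpa using this
      _ ≤ (1/ε) * (M:ℝ)^(-ε) := by
          have h0 : (0:ℝ) ≤ ((M + k : ℕ):ℝ) ^ (-ε) := by positivity
          have : (0:ℝ) < 1/ε := by positivity
          nlinarith
  have hfirst : ((M:ℝ)) ^ (-(1+ε)) ≤ (M:ℝ) ^ (-ε) :=
    Real.rpow_le_rpow_of_exponent_le hMR (by linarith)
  rw [hsplit]
  have : (1 + 1/ε) * (M:ℝ)^(-ε) = (M:ℝ)^(-ε) + (1/ε) * (M:ℝ)^(-ε) := by ring
  rw [this]
  linarith

theorem stmt_0 (ε : ℝ) (hε : 0 < ε) (a : ℕ → ℝ)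
    (hmono : StrictMono a)
    (hgrow : ∀ n : ℕ, 1 ≤ n → (n : ℝ) ^ (1 + ε) < a n) :
    ∀ N : ℕ, 1 ≤ N →
      ∑' n : ℕ, 1 / a (N + n) < (2 + 1 / ε) / (a N) ^ (ε / (1 + ε)) := by
  intro N hN
  have h1ε : (0:ℝ) < 1 + ε := by linarith
  have hNR : (1:ℝ) ≤ (N:ℝ) := by exact_mod_cast hN
  have haN1 : (1:ℝ) < a N := by
    calc (1:ℝ) ≤ (N:ℝ) ^ (1+ε) := Real.one_le_rpow hNR h1ε.le
    _ < a N := hgrow N hN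
  have haNpos : 0 < a N := by linarith
  have hposA : ∀ n : ℕ, 1 ≤ n → 0 < a n := fun n hn =>
    lt_trans (Real.rpow_pos_of_pos (by exact_mod_cast hn) _) (hgrow n hn)
  set T := (a N) ^ (1/(1+ε)) with hTdef
  have hTpos : 0 < T := Real.rpow_pos_of_pos haNpos _
  set M := max N ⌈T⌉₊ with hMdef
  have hNM : N ≤ M := le_max_left _ _
  have hM1 : 1 ≤ M := le_trans hN hNM
  have hMT : T ≤ (M:ℝ) := le_trans (Nat.le_ceil T) (by exact_mod_cast le_max_right N ⌈T⌉₊)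
  have hMNT : ((M - N : ℕ):ℝ) ≤ T := by
    rcases le_or_gt ⌈T⌉₊ N with h | h
    · have : M = N := by omega
      simp [this, hTpos.le]
    · have hMC : M = ⌈T⌉₊ := by omega
      have hceil : (⌈T⌉₊ : ℝ) < T + 1 := Nat.ceil_lt_add_one hTpos.le
      have hcast : ((M - N : ℕ):ℝ) = (M:ℝ) - (N:ℝ) := by
        rw [Nat.cast_sub hNM]
      rw [hcast, hMC]
      calc (⌈T⌉₊:ℝ) - (N:ℝ) ≤ (⌈T⌉₊:ℝ) - 1 := by linarith
        _ ≤ T := by linarith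
  clear_value M
  clear hMdef
  -- termwise bound
  have hlt : ∀ K n : ℕ, 1 ≤ K → 1 / a (K + n) < ((K + n : ℕ):ℝ) ^ (-(1+ε)) := by
    intro K n hK
    have hK1 : 1 ≤ K + n := le_add_right hK
    have hb : (0:ℝ) < ((K+n:ℕ):ℝ) ^ (1+ε) :=
      Real.rpow_pos_of_pos (by exact_mod_cast hK1) _
    have := hgrow (K+n) hK1
    rw [Real.rpow_neg (by positivity), ← one_div]
    exact one_div_lt_one_div_of_lt hb this
  obtain ⟨hgsumM, hgleM⟩ := tailsum ε hε M hM1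
  obtain ⟨hgsumN, _⟩ := tailsum ε hε N hN
  have hsumN : Summable (fun n : ℕ => 1 / a (N + n)) := by
    refine Summable.of_nonneg_of_le (fun n => ?_) (fun n => (hlt N n hN).le) hgsumN
    have := hposA (N+n) (le_add_right hN)
    positivity
  have hsumM : Summable (fun n : ℕ => 1 / a (M + n)) := by
    refine Summable.of_nonneg_of_le (fun n => ?_) (fun n => (hlt M n hM1).le) hgsumM
    have := hposA (M+n) (le_add_right hM1)
    positivity
  -- split
  have hsplit : ∑' n : ℕ, 1 / a (N + n)
      = (∑ i ∈ Finset.range (M - N), 1 / a (N + i)) + ∑' n : ℕ, 1 / a (M + n) := by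
    rw [← Summable.sum_add_tsum_nat_add (M - N) hsumN]
    congr 1
    apply tsum_congr
    intro n
    have h : N + (n + (M - N)) = M + n := by omega
    rw [h]
  set X := (a N) ^ (ε/(1+ε)) with hXdef
  have hXpos : 0 < X := Real.rpow_pos_of_pos haNpos _
  have hTX : T / a N = 1 / X := by
    rw [hTdef, hXdef, div_eq_mul_inv, ← Real.rpow_neg_one (a N), ← Real.rpow_add haNpos,
      show 1/(1+ε) + (-1) = -(ε/(1+ε)) by field_simp; ring,
      Real.rpow_neg haNpos.le, one_div]
  -- block 1
  have hblock1 : (∑ i ∈ Finset.range (M - N), 1 / a (N + i)) ≤ 1 / X := by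
    have step : ∀ i ∈ Finset.range (M - N), 1 / a (N + i) ≤ 1 / a N := by
      intro i _
      exact one_div_le_one_div_of_le haNpos (hmono.monotone (Nat.le_add_right N i))
    calc (∑ i ∈ Finset.range (M - N), 1 / a (N + i))
        ≤ ∑ _i ∈ Finset.range (M - N), 1 / a N := Finset.sum_le_sum step
      _ = ((M - N : ℕ):ℝ) * (1 / a N) := by
          rw [Finset.sum_const, Finset.card_range]; push_cast; ring
      _ ≤ T * (1 / a N) := by
          apply mul_le_mul_of_nonneg_right hMNT (by positivity)
      _ = 1 / X := by rw [← hTX]; ring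
  -- block 2
  have hTXe : T ^ (-ε) = 1 / X := by
    rw [hTdef, hXdef, ← Real.rpow_mul haNpos.le,
      show (1/(1+ε)) * (-ε) = -(ε/(1+ε)) by ring,
      Real.rpow_neg haNpos.le, one_div]
  have hblock2 : ∑' n : ℕ, 1 / a (M + n) < (1 + 1/ε) * (1 / X) := by
    have h1 : ∑' n : ℕ, 1 / a (M + n) < ∑' n : ℕ, ((M + n : ℕ):ℝ) ^ (-(1+ε)) := by
      apply Summable.tsum_lt_tsum (i := 0) (fun n => (hlt M n hM1).le) (hlt M 0 hM1) hsumM hgsumM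
    have h2 : (M:ℝ) ^ (-ε) ≤ T ^ (-ε) := by
      apply Real.rpow_le_rpow_of_nonpos hTpos hMT (by linarith)
    calc ∑' n : ℕ, 1 / a (M + n) < ∑' n : ℕ, ((M + n : ℕ):ℝ) ^ (-(1+ε)) := h1
      _ ≤ (1 + 1/ε) * (M:ℝ) ^ (-ε) := hgleM
      _ ≤ (1 + 1/ε) * T ^ (-ε) := by
          apply mul_le_mul_of_nonneg_left h2 (by positivity)
      _ = (1 + 1/ε) * (1 / X) := by rw [hTXe]
  rw [hsplit]
  have : (2 + 1/ε) / X = 1 / X + (1 + 1/ε) * (1 / X) := by field_simp; ring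
  rw [this]
  linarith
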